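/- Let k be a field of characteristic 2, V = k^{2n} with non-degenerate bilinear form β(v,w) = vᵗSw, S = [[0,I],[I,0]], G = O(2n,k), and g = o(2n) = {x : β(xv,v) = 0 ∀v}. The bilinear form on Λ²V defined by ⟨a∧b, c∧d⟩ = det [[β(a,c), β(a,d)],[β(b,c), β(b,d)]] is G-invariant and non-degenerate, and the linear map φ: Λ²V → o(V) sending a∧b to the operator v ↦ β(a,v)b + β(b,v)a is a G-equivariant linear isomorphism. Consequently o(2n) carries a G-invariant non-degenerate bilinear form. -/

import Mathlib

set_option linter.unusedSectionVars false
set_option maxHeartbeats 1000000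

open Matrix

/-- The operator `φ_{a∧b} : v ↦ β(a,v)b + β(b,v)a` associated to the bilinear form with
matrix `S`. -/
noncomputable def phiWedge {k : Type*} [Field k] {ι : Type*} [Fintype ι] [DecidableEq ι]
    (S : Matrix ι ι k) (a b : ι → k) : Module.End k (ι → k) :=
  (((Matrix.toLinearMap₂' k) S) a).smulRight b + (((Matrix.toLinearMap₂' k) S) b).smulRight a

namespace EOIF

variable {k : Type*} [Field k] {ι : Type*} [Fintype ι] [DecidableEq ι]

/-- Pairs `(i,j)` with `i` strictly before `j` in an arbitrary enumeration of `ι`. -/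
noncomputable def pairsLT (ι : Type*) [Fintype ι] [DecidableEq ι] : Finset (ι × ι) :=
  Finset.univ.filter (fun p => Fintype.equivFin ι p.1 < Fintype.equivFin ι p.2)

lemma sum_pairsLT_add_swap {M : Type*} [AddCommMonoid M] (f : ι → ι → M)
    (hdiag : ∀ i, f i i = 0) :
    ∑ p ∈ pairsLT ι, (f p.1 p.2 + f p.2 p.1) = ∑ p : ι × ι, f p.1 p.2 := by
  classical
  set e := Fintype.equivFin ι with he
  have hsplit := Finset.sum_filter_add_sum_filter_not (Finset.univ : Finset (ι × ι))
      (fun p => e p.1 < e p.2) (fun p => f p.1 p.2)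
  have hsub : Finset.univ.filter (fun p : ι × ι => e p.2 < e p.1)
      ⊆ Finset.univ.filter (fun p : ι × ι => ¬ e p.1 < e p.2) := by
    intro p hp
    simp only [Finset.mem_filter, Finset.mem_univ, true_and] at hp ⊢
    exact not_lt_of_gt hp
  have hzero : ∀ p ∈ Finset.univ.filter (fun p : ι × ι => ¬ e p.1 < e p.2),
      p ∉ Finset.univ.filter (fun p : ι × ι => e p.2 < e p.1) → f p.1 p.2 = 0 := by
    intro p hp hnp
    simp only [Finset.mem_filter, Finset.mem_univ, true_and] at hp hnp
    have h1 : e p.1 = e p.2 := le_antisymm (not_lt.mp hnp) (not_lt.mp hp)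
    have h2 : p.1 = p.2 := e.injective h1
    rw [h2]
    exact hdiag p.2
  have hswap : ∑ p ∈ Finset.univ.filter (fun p : ι × ι => e p.2 < e p.1), f p.1 p.2
      = ∑ p ∈ pairsLT ι, f p.2 p.1 := by
    apply Finset.sum_nbij' (fun p => Prod.swap p) (fun p => Prod.swap p)
    · intro p hp
      simp only [Finset.mem_filter, Finset.mem_univ, true_and, pairsLT, ← he] at hp ⊢
      exact hp
    · intro p hp
      simp only [Finset.mem_filter, Finset.mem_univ, true_and, pairsLT, ← he] at hp ⊢
      exact hp
    · intro p _; rfl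
    · intro p _; rfl
    · intro p _; rfl
  rw [Finset.sum_add_distrib]
  rw [← hswap]
  rw [← Finset.sum_subset hsub hzero] at hsplit
  show _ = ∑ p ∈ (Finset.univ : Finset (ι × ι)), f p.1 p.2
  rw [← hsplit]
  rfl

lemma phiWedge_apply (S : Matrix ι ι k) (a b v : ι → k) :
    phiWedge S a b v = (a ⬝ᵥ S *ᵥ v) • b + (b ⬝ᵥ S *ᵥ v) • a := by
  simp [phiWedge, Matrix.toLinearMap₂'_apply']

lemma vecMul_eq_mulVec {S : Matrix ι ι k} (hSymm : Sᵀ = S) (a : ι → k) :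
    a ᵥ* S = S *ᵥ a := by
  conv_rhs => rw [← hSymm]
  rw [Matrix.mulVec_transpose]

lemma dot_sym {S : Matrix ι ι k} (hSymm : Sᵀ = S) (a c : ι → k) :
    (S *ᵥ a) ⬝ᵥ c = a ⬝ᵥ S *ᵥ c := by
  rw [Matrix.dotProduct_mulVec, vecMul_eq_mulVec hSymm]

lemma mulVec_entry (S : Matrix ι ι k) (c : ι → k) (j : ι) :
    (S *ᵥ c) j = ∑ t, S j t * c t := rfl

lemma sum_mul_entry {S : Matrix ι ι k} (hSymm : Sᵀ = S) (c : ι → k) (j : ι) :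
    ∑ t, c t * S t j = (S *ᵥ c) j := by
  rw [mulVec_entry]
  apply Finset.sum_congr rfl
  intro t _
  have h : S j t = S t j := (congrFun (congrFun hSymm j) t).symm
  rw [h, mul_comm]

lemma toMatrix'_phiWedge {S : Matrix ι ι k} (hSymm : Sᵀ = S) (a b : ι → k) (i j : ι) :
    LinearMap.toMatrix' (phiWedge S a b) i j = (S *ᵥ a) j * b i + (S *ᵥ b) j * a i := by
  rw [LinearMap.toMatrix'_apply]
  have hsingle : (fun j' => if j' = j then (1:k) else 0) = Pi.single j (1:k) := by
    ext t; simp [Pi.single_apply]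
  rw [phiWedge_apply]
  have ha : a ⬝ᵥ S *ᵥ Pi.single j (1:k) = (S *ᵥ a) j := by
    rw [← dot_sym hSymm, dotProduct_single, mul_one]
  have hb : b ⬝ᵥ S *ᵥ Pi.single j (1:k) = (S *ᵥ b) j := by
    rw [← dot_sym hSymm, dotProduct_single, mul_one]
  rw [ha, hb]
  simp

lemma entry_left {S : Matrix ι ι k} (hSymm : Sᵀ = S) (a b : ι → k) (i j : ι) :
    ((LinearMap.toMatrix' (phiWedge S a b))ᵀ * S) i j
      = (S *ᵥ a) i * (S *ᵥ b) j + (S *ᵥ b) i * (S *ᵥ a) j := by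
  rw [Matrix.mul_apply]
  simp only [Matrix.transpose_apply, toMatrix'_phiWedge hSymm]
  rw [show ∑ t, ((S *ᵥ a) i * b t + (S *ᵥ b) i * a t) * S t j
      = (S *ᵥ a) i * ∑ t, b t * S t j + (S *ᵥ b) i * ∑ t, a t * S t j by
    rw [Finset.mul_sum, Finset.mul_sum, ← Finset.sum_add_distrib]
    apply Finset.sum_congr rfl; intro t _; ring]
  rw [sum_mul_entry hSymm, sum_mul_entry hSymm]

lemma entry_right {S : Matrix ι ι k} (hSymm : Sᵀ = S) (hS2 : S * S = 1) (c d : ι → k)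
    (i j : ι) :
    (S * (LinearMap.toMatrix' (phiWedge S c d))ᵀ) i j = c i * d j + d i * c j := by
  rw [Matrix.mul_apply]
  simp only [Matrix.transpose_apply, toMatrix'_phiWedge hSymm]
  rw [show ∑ t, S i t * ((S *ᵥ c) t * d j + (S *ᵥ d) t * c j)
      = (∑ t, S i t * (S *ᵥ c) t) * d j + (∑ t, S i t * (S *ᵥ d) t) * c j by
    rw [Finset.sum_mul, Finset.sum_mul, ← Finset.sum_add_distrib]
    apply Finset.sum_congr rfl; intro t _; ring]
  have hc : ∀ e : ι → k, ∑ t, S i t * (S *ᵥ e) t = e i := by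
    intro e
    have h0 : ∑ t, S i t * (S *ᵥ e) t = (S *ᵥ (S *ᵥ e)) i := rfl
    rw [h0, Matrix.mulVec_mulVec, hS2, Matrix.one_mulVec]
  rw [hc, hc]

noncomputable def halfForm (S : Matrix ι ι k) :
    Module.End k (ι → k) →ₗ[k] Module.End k (ι → k) →ₗ[k] k :=
  LinearMap.mk₂ k
    (fun x y => ∑ p ∈ pairsLT ι,
      ((LinearMap.toMatrix' x)ᵀ * S) p.1 p.2 * (S * (LinearMap.toMatrix' y)ᵀ) p.1 p.2)
    (by
      intro x x' y
      simp only [map_add, Matrix.transpose_add, Matrix.add_mul, Matrix.add_apply, add_mul,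
        Finset.sum_add_distrib])
    (by
      intro c x y
      simp only [_root_.map_smul, Matrix.transpose_smul, Matrix.smul_mul, Matrix.smul_apply,
        smul_eq_mul, Finset.mul_sum, mul_assoc])
    (by
      intro x y y'
      simp only [map_add, Matrix.transpose_add, Matrix.mul_add, Matrix.add_apply, mul_add,
        Finset.sum_add_distrib])
    (by
      intro c x y
      simp only [_root_.map_smul, Matrix.transpose_smul, Matrix.mul_smul, Matrix.smul_apply,
        smul_eq_mul, Finset.mul_sum, mul_left_comm])

lemma halfForm_apply (S : Matrix ι ι k) (x y : Module.End k (ι → k)) :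
    halfForm S x y = ∑ p ∈ pairsLT ι,
      ((LinearMap.toMatrix' x)ᵀ * S) p.1 p.2 * (S * (LinearMap.toMatrix' y)ᵀ) p.1 p.2 := rfl


variable {k : Type*} [Field k] {ι : Type*} [Fintype ι] [DecidableEq ι]

lemma single_pair (M : Matrix ι ι k) (i j : ι) :
    Pi.single i (1:k) ⬝ᵥ M *ᵥ Pi.single j 1 = M i j := by
  simp [Matrix.mulVec_single, single_dotProduct]

lemma halfForm_phi_phi [CharP k 2] {S : Matrix ι ι k} (hSymm : Sᵀ = S) (hS2 : S * S = 1)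
    (a b c d : ι → k) :
    halfForm S (phiWedge S a b) (phiWedge S c d)
      = (a ⬝ᵥ S *ᵥ c) * (b ⬝ᵥ S *ᵥ d) + (a ⬝ᵥ S *ᵥ d) * (b ⬝ᵥ S *ᵥ c) := by
  rw [halfForm_apply]
  set u := S *ᵥ a with hu
  set v := S *ᵥ b with hv
  have hstep : ∀ p ∈ pairsLT ι,
      ((LinearMap.toMatrix' (phiWedge S a b))ᵀ * S) p.1 p.2
        * (S * (LinearMap.toMatrix' (phiWedge S c d))ᵀ) p.1 p.2
      = (u p.1 * v p.2 * (c p.1 * d p.2 + d p.1 * c p.2))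
        + (u p.2 * v p.1 * (c p.2 * d p.1 + d p.2 * c p.1)) := by
    intro p _
    rw [entry_left hSymm, entry_right hSymm hS2]
    ring
  rw [Finset.sum_congr rfl hstep]
  rw [sum_pairsLT_add_swap (fun i j => u i * v j * (c i * d j + d i * c j))
    (by
      intro i
      show u i * v i * (c i * d i + d i * c i) = 0
      rw [mul_comm (d i) (c i), CharTwo.add_self_eq_zero, mul_zero])]
  rw [← dot_sym hSymm a c, ← dot_sym hSymm b d, ← dot_sym hSymm a d, ← dot_sym hSymm b c]
  rw [Fintype.sum_prod_type]
  have hrow : ∀ i, ∑ j, u i * v j * (c i * d j + d i * c j)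
      = (u i * c i) * ∑ j, v j * d j + (u i * d i) * ∑ j, v j * c j := by
    intro i
    rw [Finset.mul_sum, Finset.mul_sum, ← Finset.sum_add_distrib]
    apply Finset.sum_congr rfl; intro j _; ring
  rw [Finset.sum_congr rfl (fun i _ => hrow i), Finset.sum_add_distrib,
    ← Finset.sum_mul, ← Finset.sum_mul]
  rfl

lemma cond_diag [CharP k 2] {S : Matrix ι ι k} {x : Module.End k (ι → k)}
    (hx : ∀ v, (x v) ⬝ᵥ (S *ᵥ v) = 0) :
    (∀ i, ((LinearMap.toMatrix' x)ᵀ * S) i i = 0)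
      ∧ (∀ i j, ((LinearMap.toMatrix' x)ᵀ * S) i j = ((LinearMap.toMatrix' x)ᵀ * S) j i) := by
  set M := LinearMap.toMatrix' x with hM
  set A := Mᵀ * S with hA
  have hxv : ∀ w, x w = M *ᵥ w := by
    intro w
    conv_lhs => rw [← Matrix.toLin'_toMatrix' x]
    rw [Matrix.toLin'_apply]
  have hAv : ∀ w, w ⬝ᵥ A *ᵥ w = 0 := by
    intro w
    rw [hA, ← Matrix.mulVec_mulVec, Matrix.dotProduct_mulVec, Matrix.vecMul_transpose,
      ← hxv]
    exact hx w
  have hdiag : ∀ i, A i i = 0 := by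
    intro i
    have := hAv (Pi.single i 1)
    rwa [single_pair] at this
  refine ⟨hdiag, ?_⟩
  intro i j
  have h2 := hAv (Pi.single i 1 + Pi.single j 1)
  rw [Matrix.mulVec_add, dotProduct_add, add_dotProduct,
    add_dotProduct, single_pair, single_pair, single_pair, single_pair,
    hdiag i, hdiag j] at h2
  have h3 : A i j + A j i = 0 := by linear_combination h2
  have h4 : A i j = - A j i := eq_neg_of_add_eq_zero_left h3
  rwa [CharTwo.neg_eq] at h4

lemma matrix_eq_S_mul [CharP k 2] {S : Matrix ι ι k} (hSymm : Sᵀ = S) (hS2 : S * S = 1)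
    {x : Module.End k (ι → k)} (hx : ∀ v, (x v) ⬝ᵥ (S *ᵥ v) = 0) :
    LinearMap.toMatrix' x = S * ((LinearMap.toMatrix' x)ᵀ * S) := by
  obtain ⟨hdiag, hsym⟩ := cond_diag hx
  set M := LinearMap.toMatrix' x with hM
  set A := Mᵀ * S with hA
  have hAt : Aᵀ = A := by
    ext i j; exact (hsym j i)
  have h1 : Aᵀ = Sᵀ * M := by
    rw [hA, Matrix.transpose_mul, Matrix.transpose_transpose]
  rw [← hAt, h1, hSymm, ← Matrix.mul_assoc, hS2, Matrix.one_mul]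
lemma end_apply_eq (x : Module.End k (ι → k)) (v : ι → k) :
    x v = (LinearMap.toMatrix' x) *ᵥ v := by
  conv_lhs => rw [← Matrix.toLin'_toMatrix' x]
  rw [Matrix.toLin'_apply]

lemma decomp [CharP k 2] {S : Matrix ι ι k} (hSymm : Sᵀ = S) (hS2 : S * S = 1)
    {x : Module.End k (ι → k)} (hx : ∀ v, (x v) ⬝ᵥ (S *ᵥ v) = 0) :
    x = ∑ p ∈ pairsLT ι, (((LinearMap.toMatrix' x)ᵀ * S) p.1 p.2) •
      phiWedge S (S *ᵥ Pi.single p.1 1) (S *ᵥ Pi.single p.2 1) := by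
  obtain ⟨hdiag, hsym⟩ := cond_diag hx
  set M := LinearMap.toMatrix' x with hM
  set A := Mᵀ * S with hA
  have hval : ∀ (r : ι) (v : ι → k), (S *ᵥ Pi.single r 1) ⬝ᵥ S *ᵥ v = v r := by
    intro r v
    rw [dot_sym hSymm, Matrix.mulVec_mulVec, hS2, Matrix.one_mulVec,
      single_dotProduct, one_mul]
  apply LinearMap.ext
  intro v
  funext i
  rw [LinearMap.sum_apply, Finset.sum_apply]
  have hterm : ∀ p : ι × ι,
      ((A p.1 p.2 • phiWedge S (S *ᵥ Pi.single p.1 1) (S *ᵥ Pi.single p.2 1)) v) i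
      = A p.1 p.2 * (v p.1 * S i p.2) + A p.2 p.1 * (v p.2 * S i p.1) := by
    intro p
    rw [LinearMap.smul_apply, phiWedge_apply, hval, hval]
    have hs1 : (S *ᵥ Pi.single p.1 (1:k)) i = S i p.1 := by
      rw [Matrix.mulVec_single]; exact mul_one _
    have hs2 : (S *ᵥ Pi.single p.2 (1:k)) i = S i p.2 := by
      rw [Matrix.mulVec_single]; exact mul_one _
    simp only [Pi.smul_apply, Pi.add_apply, smul_eq_mul, hs1, hs2]
    rw [hsym p.2 p.1]
    ring
  rw [Finset.sum_congr rfl (fun p _ => hterm p)]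
  rw [sum_pairsLT_add_swap (fun r s => A r s * (v r * S i s))
    (by intro r; show A r r * (v r * S i r) = 0; rw [hdiag, zero_mul])]
  rw [end_apply_eq x v]
  rw [show LinearMap.toMatrix' x = S * A from matrix_eq_S_mul hSymm hS2 hx]
  rw [Fintype.sum_prod_type]
  have hrow : ∀ r, ∑ s, A r s * (v r * S i s) = (S * A) i r * v r := by
    intro r
    rw [Matrix.mul_apply, Finset.sum_mul]
    apply Finset.sum_congr rfl
    intro s _
    rw [hsym r s]
    ring
  rw [Finset.sum_congr rfl (fun r _ => hrow r)]
  rw [mulVec_entry]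

lemma halfForm_x_single [CharP k 2] {S : Matrix ι ι k} (hSymm : Sᵀ = S) (hS2 : S * S = 1)
    (x : Module.End k (ι → k)) {r s : ι} (hrs : (r, s) ∈ pairsLT ι) :
    halfForm S x (phiWedge S (Pi.single r 1) (Pi.single s 1))
      = ((LinearMap.toMatrix' x)ᵀ * S) r s := by
  rw [halfForm_apply]
  have hlt : Fintype.equivFin ι r < Fintype.equivFin ι s := by
    simpa [pairsLT] using hrs
  have hne : r ≠ s := by
    intro h; rw [h] at hlt; exact lt_irrefl _ hlt
  have hsum : ∀ p ∈ pairsLT ι,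
      ((LinearMap.toMatrix' x)ᵀ * S) p.1 p.2
        * (S * (LinearMap.toMatrix' (phiWedge S (Pi.single r 1) (Pi.single s 1)))ᵀ) p.1 p.2
      = ((LinearMap.toMatrix' x)ᵀ * S) p.1 p.2
        * ((Pi.single r (1:k) : ι → k) p.1 * (Pi.single s (1:k) : ι → k) p.2
            + (Pi.single s (1:k) : ι → k) p.1 * (Pi.single r (1:k) : ι → k) p.2) := by
    intro p _
    rw [entry_right hSymm hS2]
  rw [Finset.sum_congr rfl hsum]
  rw [Finset.sum_eq_single_of_mem (r, s) hrs]
  · rw [Pi.single_eq_same, Pi.single_eq_same, Pi.single_eq_of_ne hne,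
      Pi.single_eq_of_ne (Ne.symm hne)]
    ring
  · intro p hp hne'
    have e1 : (Pi.single r (1:k) : ι → k) p.1 * (Pi.single s (1:k) : ι → k) p.2 = 0 := by
      by_cases h1 : p.1 = r
      · by_cases h2 : p.2 = s
        · exact absurd (Prod.ext h1 h2) hne'
        · rw [Pi.single_eq_of_ne h2, mul_zero]
      · rw [Pi.single_eq_of_ne h1, zero_mul]
    have e2 : (Pi.single s (1:k) : ι → k) p.1 * (Pi.single r (1:k) : ι → k) p.2 = 0 := by
      by_cases h1 : p.1 = s
      · by_cases h2 : p.2 = r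
        · exfalso
          have hp' : Fintype.equivFin ι p.1 < Fintype.equivFin ι p.2 := by
            simpa [pairsLT] using hp
          rw [h1, h2] at hp'
          exact lt_asymm hlt hp'
        · rw [Pi.single_eq_of_ne h2, mul_zero]
      · rw [Pi.single_eq_of_ne h1, zero_mul]
    rw [e1, e2, add_zero, mul_zero]
end EOIF

open EOIF in
theorem even_orthogonal_invariant_form
    {k : Type*} [Field k] [CharP k 2] (n : ℕ)
    (S B : Matrix (Fin n ⊕ Fin n) (Fin n ⊕ Fin n) k)
    (hS : S = Matrix.fromBlocks 0 1 1 0)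
    (hB : B = Matrix.fromBlocks 0 1 0 0) :
    (∀ a b v, (phiWedge S a b v) ⬝ᵥ (S.mulVec v) = 0) ∧
    (∀ g : Matrix (Fin n ⊕ Fin n) (Fin n ⊕ Fin n) k,
      (∀ v, (g.mulVec v) ⬝ᵥ (B.mulVec (g.mulVec v)) = v ⬝ᵥ (B.mulVec v)) →
      ∀ a b, phiWedge S (g.mulVec a) (g.mulVec b) =
        g.mulVecLin ∘ₗ phiWedge S a b ∘ₗ (g⁻¹).mulVecLin) ∧
    (∀ x : Module.End k (Fin n ⊕ Fin n → k),
      (∀ v, (x v) ⬝ᵥ (S.mulVec v) = 0) ↔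
      x ∈ Submodule.span k {e | ∃ a b, e = phiWedge S a b}) ∧
    (∃ Bf : Module.End k (Fin n ⊕ Fin n → k) →ₗ[k]
        Module.End k (Fin n ⊕ Fin n → k) →ₗ[k] k,
      (∀ a b c d, Bf (phiWedge S a b) (phiWedge S c d) =
        (a ⬝ᵥ S.mulVec c) * (b ⬝ᵥ S.mulVec d) + (a ⬝ᵥ S.mulVec d) * (b ⬝ᵥ S.mulVec c)) ∧
      (∀ g : Matrix (Fin n ⊕ Fin n) (Fin n ⊕ Fin n) k,
        (∀ v, (g.mulVec v) ⬝ᵥ (B.mulVec (g.mulVec v)) = v ⬝ᵥ (B.mulVec v)) →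
        ∀ x y : Module.End k (Fin n ⊕ Fin n → k),
          (∀ v, (x v) ⬝ᵥ (S.mulVec v) = 0) → (∀ v, (y v) ⬝ᵥ (S.mulVec v) = 0) →
          Bf (g.mulVecLin ∘ₗ x ∘ₗ (g⁻¹).mulVecLin) (g.mulVecLin ∘ₗ y ∘ₗ (g⁻¹).mulVecLin)
            = Bf x y) ∧
      (∀ x : Module.End k (Fin n ⊕ Fin n → k), (∀ v, (x v) ⬝ᵥ (S.mulVec v) = 0) →
        (∀ y : Module.End k (Fin n ⊕ Fin n → k),
          (∀ v, (y v) ⬝ᵥ (S.mulVec v) = 0) → Bf x y = 0) → x = 0)) := by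
  classical
  -- basic facts about S and B
  have hSymm : Sᵀ = S := by
    rw [hS, Matrix.fromBlocks_transpose]
    simp
  have hS2 : S * S = 1 := by
    rw [hS, Matrix.fromBlocks_multiply]
    simp [Matrix.fromBlocks_one]
  have hBB : B + Bᵀ = S := by
    rw [hB, hS, Matrix.fromBlocks_transpose, Matrix.fromBlocks_add]
    simp
  have hdetS : IsUnit S.det := by
    have h : S.det * S.det = 1 := by rw [← Matrix.det_mul, hS2, Matrix.det_one]
    exact IsUnit.of_mul_eq_one _ h
  -- part (i)
  have hpart1 : ∀ a b v : (Fin n ⊕ Fin n) → k, (phiWedge S a b v) ⬝ᵥ (S *ᵥ v) = 0 := by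
    intro a b v
    rw [phiWedge_apply, add_dotProduct, smul_dotProduct,
      smul_dotProduct, smul_eq_mul, smul_eq_mul,
      mul_comm (b ⬝ᵥ S *ᵥ v) (a ⬝ᵥ S *ᵥ v)]
    exact CharTwo.add_self_eq_zero _
  -- quadratic invariance implies bilinear invariance
  have hbeta : ∀ g : Matrix (Fin n ⊕ Fin n) (Fin n ⊕ Fin n) k,
      (∀ v, (g *ᵥ v) ⬝ᵥ (B *ᵥ (g *ᵥ v)) = v ⬝ᵥ (B *ᵥ v)) →
      ∀ v w, (g *ᵥ v) ⬝ᵥ S *ᵥ (g *ᵥ w) = v ⬝ᵥ S *ᵥ w := by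
    intro g hg v w
    have hpol : ∀ u w' : (Fin n ⊕ Fin n) → k, u ⬝ᵥ S *ᵥ w' = u ⬝ᵥ B *ᵥ w' + w' ⬝ᵥ B *ᵥ u := by
      intro u w'
      rw [← hBB, Matrix.add_mulVec, dotProduct_add]
      congr 1
      rw [Matrix.mulVec_transpose, dotProduct_comm, ← Matrix.dotProduct_mulVec]
    have h := hg (v + w)
    rw [Matrix.mulVec_add] at h
    simp only [dotProduct_add, add_dotProduct, Matrix.mulVec_add] at h
    rw [hpol v w, hpol (g *ᵥ v) (g *ᵥ w)]
    linear_combination h - hg v - hg w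
  -- orthogonal matrices are invertible
  have hOrth : ∀ g : Matrix (Fin n ⊕ Fin n) (Fin n ⊕ Fin n) k,
      (∀ v w, (g *ᵥ v) ⬝ᵥ S *ᵥ (g *ᵥ w) = v ⬝ᵥ S *ᵥ w) →
      ∀ v, g *ᵥ (g⁻¹ *ᵥ v) = v := by
    intro g hβ
    have hgtsg : gᵀ * S * g = S := by
      ext i j
      have h := hβ (Pi.single i 1) (Pi.single j 1)
      rw [single_pair] at h
      rw [← h]
      have h1 : g *ᵥ Pi.single i 1 = Pi.single i 1 ᵥ* gᵀ := by
        rw [Matrix.vecMul_transpose]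
      rw [h1, Matrix.mulVec_mulVec, ← Matrix.dotProduct_mulVec, Matrix.mulVec_mulVec,
        ← Matrix.mul_assoc, single_pair]
    have hdet : IsUnit g.det := by
      have h2 := congrArg Matrix.det hgtsg
      rw [Matrix.det_mul, Matrix.det_mul, Matrix.det_transpose] at h2
      have h4 : (g.det * g.det) * S.det = 1 * S.det := by linear_combination h2
      exact IsUnit.of_mul_eq_one _ (mul_right_cancel₀ hdetS.ne_zero h4)
    intro v
    rw [Matrix.mulVec_mulVec, Matrix.mul_nonsing_inv g hdet, Matrix.one_mulVec]
  -- part (ii)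
  have hpart2 : ∀ g : Matrix (Fin n ⊕ Fin n) (Fin n ⊕ Fin n) k,
      (∀ v, (g *ᵥ v) ⬝ᵥ (B *ᵥ (g *ᵥ v)) = v ⬝ᵥ (B *ᵥ v)) →
      ∀ a b, phiWedge S (g *ᵥ a) (g *ᵥ b) =
        g.mulVecLin ∘ₗ phiWedge S a b ∘ₗ (g⁻¹).mulVecLin := by
    intro g hg a b
    have hβ := hbeta g hg
    have hid := hOrth g hβ
    apply LinearMap.ext
    intro v
    rw [LinearMap.comp_apply, LinearMap.comp_apply, Matrix.mulVecLin_apply,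
      Matrix.mulVecLin_apply, phiWedge_apply, phiWedge_apply,
      Matrix.mulVec_add, Matrix.mulVec_smul, Matrix.mulVec_smul]
    have hterm : ∀ c : (Fin n ⊕ Fin n) → k, (g *ᵥ c) ⬝ᵥ S *ᵥ v = c ⬝ᵥ S *ᵥ (g⁻¹ *ᵥ v) := by
      intro c
      conv_lhs => rw [← hid v]
      exact hβ c (g⁻¹ *ᵥ v)
    rw [hterm a, hterm b]
  -- part (iii)
  have hpart3 : ∀ x : Module.End k ((Fin n ⊕ Fin n) → k),
      (∀ v, (x v) ⬝ᵥ (S *ᵥ v) = 0) ↔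
      x ∈ Submodule.span k {e | ∃ a b, e = phiWedge S a b} := by
    intro x
    constructor
    · intro hx
      rw [decomp hSymm hS2 hx]
      apply Submodule.sum_mem
      intro p _
      exact Submodule.smul_mem _ _ (Submodule.subset_span ⟨_, _, rfl⟩)
    · intro hx
      refine Submodule.span_induction (p := fun e _ => ∀ v, (e v) ⬝ᵥ (S *ᵥ v) = 0)
        ?_ ?_ ?_ ?_ hx
      · rintro e ⟨a, b, rfl⟩
        exact hpart1 a b
      · intro v; simp
      · intro x' y' _ _ hx' hy' v
        rw [LinearMap.add_apply, add_dotProduct, hx' v, hy' v, add_zero]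
      · intro c x' _ hx' v
        rw [LinearMap.smul_apply, smul_dotProduct, hx' v, smul_zero]
  refine ⟨hpart1, hpart2, hpart3, halfForm S, fun a b c d => halfForm_phi_phi hSymm hS2 a b c d, ?_, ?_⟩
  · -- invariance
    intro g hg x y hx hy
    have hβ := hbeta g hg
    have hxs := (hpart3 x).mp hx
    have hys := (hpart3 y).mp hy
    have key : ∀ x' ∈ Submodule.span k {e | ∃ a b, e = phiWedge S a b},
        ∀ y' ∈ Submodule.span k {e | ∃ a b, e = phiWedge S a b},
        halfForm S (g.mulVecLin ∘ₗ x' ∘ₗ (g⁻¹).mulVecLin)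
            (g.mulVecLin ∘ₗ y' ∘ₗ (g⁻¹).mulVecLin)
          = halfForm S x' y' := by
      intro x' hx'
      refine Submodule.span_induction
        (p := fun x' _ => ∀ y' ∈ Submodule.span k {e | ∃ a b, e = phiWedge S a b},
          halfForm S (g.mulVecLin ∘ₗ x' ∘ₗ (g⁻¹).mulVecLin)
              (g.mulVecLin ∘ₗ y' ∘ₗ (g⁻¹).mulVecLin)
            = halfForm S x' y') ?_ ?_ ?_ ?_ hx'
      · rintro x'' ⟨a, b, rfl⟩ y' hy'
        refine Submodule.span_induction
          (p := fun y' _ =>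
            halfForm S (g.mulVecLin ∘ₗ phiWedge S a b ∘ₗ (g⁻¹).mulVecLin)
                (g.mulVecLin ∘ₗ y' ∘ₗ (g⁻¹).mulVecLin)
              = halfForm S (phiWedge S a b) y') ?_ ?_ ?_ ?_ hy'
        · rintro y'' ⟨c, d, rfl⟩
          rw [← hpart2 g hg a b, ← hpart2 g hg c d,
            halfForm_phi_phi hSymm hS2, halfForm_phi_phi hSymm hS2,
            hβ a c, hβ b d, hβ a d, hβ b c]
        · simp only [LinearMap.comp_zero, LinearMap.zero_comp, map_zero]
        · intro y1 y2 _ _ h1 h2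
          simp only [LinearMap.comp_add, LinearMap.add_comp, map_add]
          rw [h1, h2]
        · intro c y1 _ h1
          simp only [LinearMap.comp_smul, LinearMap.smul_comp, _root_.map_smul,
            smul_eq_mul]
          rw [h1]
      · intro y' _
        simp only [LinearMap.comp_zero, LinearMap.zero_comp, map_zero,
          LinearMap.zero_apply]
      · intro x1 x2 _ _ h1 h2 y' hy'
        simp only [LinearMap.comp_add, LinearMap.add_comp, map_add,
          LinearMap.add_apply]
        rw [h1 y' hy', h2 y' hy']
      · intro c x1 _ h1 y' hy'
        simp only [LinearMap.comp_smul, LinearMap.smul_comp, _root_.map_smul,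
          LinearMap.smul_apply, smul_eq_mul]
        rw [h1 y' hy']
    exact key x hxs y hys
  · -- nondegeneracy
    intro x hx h0
    obtain ⟨hdiag, hsym⟩ := cond_diag hx
    have hA0 : ((LinearMap.toMatrix' x)ᵀ * S) = 0 := by
      have hlt : ∀ r s : Fin n ⊕ Fin n, Fintype.equivFin (Fin n ⊕ Fin n) r < Fintype.equivFin (Fin n ⊕ Fin n) s →
          ((LinearMap.toMatrix' x)ᵀ * S) r s = 0 := by
        intro r s h
        have hrs : (r, s) ∈ pairsLT (Fin n ⊕ Fin n) := by simp [pairsLT, h]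
        rw [← halfForm_x_single hSymm hS2 x hrs]
        exact h0 _ (hpart1 _ _)
      ext r s
      rcases lt_trichotomy (Fintype.equivFin (Fin n ⊕ Fin n) r) (Fintype.equivFin (Fin n ⊕ Fin n) s) with h | h | h
      · rw [hlt r s h]; rfl
      · have : r = s := (Fintype.equivFin (Fin n ⊕ Fin n)).injective h
        rw [this, hdiag]; rfl
      · rw [hsym r s, hlt s r h]; rfl
    have hM : LinearMap.toMatrix' x = 0 := by
      rw [matrix_eq_S_mul hSymm hS2 hx, hA0, Matrix.mul_zero]
    rw [← Matrix.toLin'_toMatrix' x, hM]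
    exact LinearEquiv.map_zero _
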